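/- For Rule 28 (and similarly Rule 29) on a ring of size n, any configuration containing the word 01001 as a factor (cyclically) never reaches a fixed point under any sequential update mode: the single 0 between the two walls 01 alternates forever. -/
import Mathlib


/-- Single-cell update: replace the state of cell `i` by the local rule applied
to its neighborhood on the ring `ZMod n`. -/
def eupdate (n : ℕ) (f : Bool → Bool → Bool → Bool) (x : ZMod n → Bool) (i : ZMod n) :
    ZMod n → Bool :=
  Function.update x i (f (x (i - 1)) (x i) (x (i + 1)))

/-- Synchronous (parallel) step. -/
def parStep (n : ℕ) (f : Bool → Bool → Bool → Bool) (x : ZMod n → Bool) : ZMod n → Bool :=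
  fun i => f (x (i - 1)) (x i) (x (i + 1))

/-- `x` is a fixed point of the parallel dynamics. -/
def IsFixedConfig (n : ℕ) (f : Bool → Bool → Bool → Bool) (x : ZMod n → Bool) : Prop :=
  ∀ i : ZMod n, f (x (i - 1)) (x i) (x (i + 1)) = x i

/-- One full sequential step under the sequential update mode `μ`
(a permutation of the cells): update cells one at a time in the order
`μ 0, μ 1, …, μ (n-1)`. -/
def seqStep (n : ℕ) (f : Bool → Bool → Bool → Bool) (μ : Fin n ≃ ZMod n)
    (x : ZMod n → Bool) : ZMod n → Bool :=
  (List.finRange n).foldl (fun y k => eupdate n f y (μ k)) x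

/-- One full sequential step under the descending order `(n-1, n-2, …, 0)`. -/
def seqStepDesc (n : ℕ) (f : Bool → Bool → Bool → Bool) (x : ZMod n → Bool) : ZMod n → Bool :=
  ((List.range n).reverse).foldl (fun y k => eupdate n f y (k : ZMod n)) x

/-- One full sequential step under the ascending order `(0, 1, …, n-1)`. -/
def seqStepAsc (n : ℕ) (f : Bool → Bool → Bool → Bool) (x : ZMod n → Bool) : ZMod n → Bool :=
  (List.range n).foldl (fun y k => eupdate n f y (k : ZMod n)) x

def rule28 : Bool → Bool → Bool → Bool
  | true, true, true => false
  | true, true, false => false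
  | true, false, true => false
  | true, false, false => true
  | false, true, true => true
  | false, true, false => true
  | false, false, true => false
  | false, false, false => false

def rule29 : Bool → Bool → Bool → Bool
  | true, true, true => false
  | true, true, false => false
  | true, false, true => false
  | true, false, false => true
  | false, true, true => true
  | false, true, false => true
  | false, false, true => false
  | false, false, false => true

/-- Invariant: the two frozen walls `01` at `(i, i+1)` and `(i+3, i+4)`. -/
def invP (n : ℕ) (i : ZMod n) (y : ZMod n → Bool) : Prop :=
  y i = false ∧ y (i + 1) = true ∧ y (i + 3) = false ∧ y (i + 4) = true

lemma invP_eupdate {n : ℕ} (f : Bool → Bool → Bool → Bool)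
    (hA : ∀ a, f a false true = false) (hB : ∀ c, f false true c = true)
    (i : ZMod n) (y : ZMod n → Bool) (hy : invP n i y) (j : ZMod n) :
    invP n i (eupdate n f y j) := by
  obtain ⟨h0, h1, h3, h4⟩ := hy
  unfold eupdate
  refine ⟨?_, ?_, ?_, ?_⟩
  · rw [Function.update_apply]
    split
    · next h =>
      subst h
      rw [h0, h1]; exact hA _
    · exact h0
  · rw [Function.update_apply]
    split
    · next h =>
      subst h
      rw [show i + 1 - 1 = i from by ring, h0, h1]; exact hB _
    · exact h1
  · rw [Function.update_apply]
    split
    · next h =>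
      subst h
      rw [show i + 3 + 1 = i + 4 from by ring, h3, h4]; exact hA _
    · exact h3
  · rw [Function.update_apply]
    split
    · next h =>
      subst h
      rw [show i + 4 - 1 = i + 3 from by ring, h3, h4]; exact hB _
    · exact h4

lemma invP_foldl {n : ℕ} (f : Bool → Bool → Bool → Bool)
    (hA : ∀ a, f a false true = false) (hB : ∀ c, f false true c = true)
    (i : ZMod n) (l : List (ZMod n)) :
    ∀ y : ZMod n → Bool, invP n i y →
      invP n i (l.foldl (fun y k => eupdate n f y k) y) := by
  induction l with
  | nil => intro y hy; exact hy
  | cons a l ih =>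
    intro y hy
    exact ih _ (invP_eupdate f hA hB i y hy a)

lemma invP_seqStep {n : ℕ} (f : Bool → Bool → Bool → Bool)
    (hA : ∀ a, f a false true = false) (hB : ∀ c, f false true c = true)
    (i : ZMod n) (μ : Fin n ≃ ZMod n) (y : ZMod n → Bool) (hy : invP n i y) :
    invP n i (seqStep n f μ y) := by
  unfold seqStep
  have := invP_foldl f hA hB i ((List.finRange n).map μ) y hy
  rwa [List.foldl_map] at this

lemma invP_iterate {n : ℕ} (f : Bool → Bool → Bool → Bool)
    (hA : ∀ a, f a false true = false) (hB : ∀ c, f false true c = true)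
    (i : ZMod n) (μ : Fin n ≃ ZMod n) (y : ZMod n → Bool) (hy : invP n i y) :
    ∀ t : ℕ, invP n i ((seqStep n f μ)^[t] y) := by
  intro t
  induction t with
  | zero => exact hy
  | succ t ih =>
    rw [Function.iterate_succ_apply']
    exact invP_seqStep f hA hB i μ _ ih

lemma invP_not_fixed {n : ℕ} (f : Bool → Bool → Bool → Bool)
    (hC : ∀ b, f true b false ≠ b)
    (i : ZMod n) (y : ZMod n → Bool) (hy : invP n i y) :
    ¬ IsFixedConfig n f y := by
  intro hF
  obtain ⟨h0, h1, h3, h4⟩ := hy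
  have := hF (i + 2)
  rw [show i + 2 - 1 = i + 1 from by ring, show i + 2 + 1 = i + 3 from by ring,
    h1, h3] at this
  exact hC _ this

theorem rule28_29_01001_never_fixed (n : ℕ) (hn : 0 < n) (x : ZMod n → Bool)
    (i : ZMod n)
    (hx : x i = false ∧ x (i + 1) = true ∧ x (i + 2) = false ∧
          x (i + 3) = false ∧ x (i + 4) = true)
    (μ : Fin n ≃ ZMod n) :
    ∀ t : ℕ,
      ¬ IsFixedConfig n rule28 ((seqStep n rule28 μ)^[t] x) ∧
      ¬ IsFixedConfig n rule29 ((seqStep n rule29 μ)^[t] x) := by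
  obtain ⟨h0, h1, h2, h3, h4⟩ := hx
  have hx' : invP n i x := ⟨h0, h1, h3, h4⟩
  have hA28 : ∀ a, rule28 a false true = false := by decide
  have hB28 : ∀ c, rule28 false true c = true := by decide
  have hC28 : ∀ b, rule28 true b false ≠ b := by decide
  have hA29 : ∀ a, rule29 a false true = false := by decide
  have hB29 : ∀ c, rule29 false true c = true := by decide
  have hC29 : ∀ b, rule29 true b false ≠ b := by decide
  intro t
  exact ⟨invP_not_fixed rule28 hC28 i _ (invP_iterate rule28 hA28 hB28 i μ x hx' t),
         invP_not_fixed rule29 hC29 i _ (invP_iterate rule29 hA29 hB29 i μ x hx' t)⟩
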